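/- Let R = W(k) be the Witt vectors over an algebraically closed field k of characteristic p, and δ : R → R the standard p-derivation δ(x) = (φ(x) - x^p)/p where φ is the Frobenius automorphism. Then for b ∈ R, b = 0 if and only if δ^i(b) ≡ 0 mod p for all i ≥ 0. -/

import Mathlib

open WittVector

/-- Let `R = W(k)` with `k` an algebraic closure of `ℤ/pℤ`, `φ` the Frobenius
automorphism and `δ(x) = (φ(x) - x^p)/p` the standard `p`-derivation. Then for
`b ∈ R`, `b = 0` if and only if `δ^i(b) ≡ 0 mod p` for all `i ≥ 0`. -/
theorem zero_iff_all_delta_iterates_zero_mod_p (p : ℕ) [Fact p.Prime]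
    (δ : WittVector p (AlgebraicClosure (ZMod p)) →
         WittVector p (AlgebraicClosure (ZMod p)))
    (hδ : ∀ x, (p : WittVector p (AlgebraicClosure (ZMod p))) * δ x =
      WittVector.frobenius x - x ^ p)
    (b : WittVector p (AlgebraicClosure (ZMod p))) :
    b = 0 ↔ ∀ i : ℕ, (p : WittVector p (AlgebraicClosure (ZMod p))) ∣ δ^[i] b := by
  have hpirr : Irreducible (p : WittVector p (AlgebraicClosure (ZMod p))) := WittVector.irreducible p
  have hpne : (p : WittVector p (AlgebraicClosure (ZMod p))) ≠ 0 := hpirr.ne_zero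
  have hδ0 : δ 0 = 0 := by
    have h : (p : WittVector p (AlgebraicClosure (ZMod p))) * δ 0 =
        (p : WittVector p (AlgebraicClosure (ZMod p))) * 0 := by
      rw [hδ 0, map_zero, zero_pow (Fact.out : p.Prime).ne_zero, sub_zero, mul_zero]
    exact mul_left_cancel₀ hpne h
  constructor
  · rintro rfl i
    rw [Function.iterate_fixed hδ0]
    exact dvd_zero _
  · intro h
    -- Key claim: `p ^ n ∣ b` for every `n`.
    have key : ∀ n : ℕ, ∀ b : WittVector p (AlgebraicClosure (ZMod p)),
        (∀ i, (p : WittVector p (AlgebraicClosure (ZMod p))) ∣ δ^[i] b) → (p : WittVector p (AlgebraicClosure (ZMod p))) ^ n ∣ b := by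
      intro n
      induction n with
      | zero => intro b _; simp
      | succ n ih =>
        intro b hb
        obtain ⟨c, hc⟩ := hb 0
        simp only [Function.iterate_zero, id] at hc
        cases n with
        | zero => simpa [pow_one] using hb 0
        | succ m =>
          -- From the inductive hypothesis applied to `b` and to `δ b`.
          have hpnb : (p : WittVector p (AlgebraicClosure (ZMod p))) ^ (m + 1) ∣ b := ih b hb
          have hpδb : (p : WittVector p (AlgebraicClosure (ZMod p))) ^ (m + 1) ∣ δ b := by
            refine ih (δ b) fun i => ?_
            have := hb (i + 1)
            rwa [Function.iterate_succ_apply] at this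
          -- `p ^ m ∣ c`
          have hpc : (p : WittVector p (AlgebraicClosure (ZMod p))) ^ m ∣ c := by
            obtain ⟨d, hd⟩ := hpnb
            rw [hc, pow_succ, mul_comm ((p : WittVector p (AlgebraicClosure (ZMod p))) ^ m), mul_assoc] at hd
            exact ⟨d, mul_left_cancel₀ hpne hd⟩
          -- `δ b = frobenius c - p ^ (p - 1) * c ^ p`
          have hδb : δ b = WittVector.frobenius c - (p : WittVector p (AlgebraicClosure (ZMod p))) ^ (p - 1) * c ^ p := by
            refine mul_left_cancel₀ hpne ?_
            rw [hδ b, hc, map_mul, map_natCast, mul_pow, mul_sub, ← mul_assoc,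
              ← pow_succ']
            rw [Nat.sub_add_cancel (Fact.out : p.Prime).one_lt.le]
          -- `p ^ (m + 1) ∣ p ^ (p - 1) * c ^ p`
          have hdvd2 : (p : WittVector p (AlgebraicClosure (ZMod p))) ^ (m + 1) ∣
              (p : WittVector p (AlgebraicClosure (ZMod p))) ^ (p - 1) * c ^ p := by
            have h1 : (p : WittVector p (AlgebraicClosure (ZMod p))) ^ (p - 1 + m * p) ∣
                (p : WittVector p (AlgebraicClosure (ZMod p))) ^ (p - 1) * c ^ p := by
              rw [pow_add]
              exact mul_dvd_mul dvd_rfl (by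
                have := pow_dvd_pow_of_dvd hpc p
                rwa [← pow_mul] at this)
            refine dvd_trans (pow_dvd_pow _ ?_) h1
            have hp2 : 2 ≤ p := (Fact.out : p.Prime).two_le
            have : 1 ≤ p - 1 := by omega
            calc m + 1 ≤ m * p + (p - 1) := by nlinarith [Nat.sub_add_cancel (by omega : 1 ≤ p)]
              _ = p - 1 + m * p := by ring
          -- hence `p ^ (m + 1) ∣ frobenius c`
          have hfrob : (p : WittVector p (AlgebraicClosure (ZMod p))) ^ (m + 1) ∣ WittVector.frobenius c := by
            have : WittVector.frobenius c =
                δ b + (p : WittVector p (AlgebraicClosure (ZMod p))) ^ (p - 1) * c ^ p := by rw [hδb]; ring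
            rw [this]
            exact dvd_add hpδb hdvd2
          -- transfer back along the Frobenius equivalence: `p ^ (m + 1) ∣ c`
          have hpc' : (p : WittVector p (AlgebraicClosure (ZMod p))) ^ (m + 1) ∣ c := by
            obtain ⟨d, hd⟩ := hfrob
            have := congrArg (WittVector.frobeniusEquiv p (AlgebraicClosure (ZMod p))).symm hd
            rw [show WittVector.frobenius c = WittVector.frobeniusEquiv p (AlgebraicClosure (ZMod p)) c from rfl,
              RingEquiv.symm_apply_apply, map_mul, map_pow, map_natCast] at this
            exact ⟨_, this⟩
          rw [hc, pow_succ']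
          exact mul_dvd_mul dvd_rfl hpc'
    -- Conclude `b = 0` from `p ^ n ∣ b` for all `n`.
    by_contra hb0
    obtain ⟨m, u, hu⟩ := WittVector.exists_eq_pow_p_mul' b hb0
    obtain ⟨d, hd⟩ := key (m + 1) b h
    rw [hu, pow_succ, mul_assoc] at hd
    have : (u : WittVector p (AlgebraicClosure (ZMod p))) = (p : WittVector p (AlgebraicClosure (ZMod p))) * d :=
      mul_left_cancel₀ (pow_ne_zero _ hpne) hd
    exact hpirr.not_isUnit (isUnit_of_dvd_unit ⟨d, this⟩ u.isUnit)
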